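/- Let G be a connected graph and let (T, 𝒳) be a tree-cut decomposition of G of finite adhesion whose parts are precisely the ω-edge blocks of G and such that for every edge t₁t₂ of T there is an edge of G between X_{t₁} and X_{t₂}. Then for every region C' of T, the subgraph of G induced on ⋃_{t ∈ C'} X_t is a region of G. -/
import Mathlib


/-- The set of edges of `G` with one endpoint in `A` and the other in `B`. -/
def edgesBetween {V : Type*} (G : SimpleGraph V) (A B : Set V) : Set (Sym2 V) :=
  {e | e ∈ G.edgeSet ∧ ∃ x ∈ A, ∃ y ∈ B, e = s(x, y)}

/-- `x ~ y` iff no finite set of edges of `G` separates `x` from `y`. -/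
def OmegaEquiv {V : Type*} (G : SimpleGraph V) (x y : V) : Prop :=
  ∀ F : Set (Sym2 V), F.Finite → (G.deleteEdges F).Reachable x y

/-- The ω-edge blocks of `G` are the equivalence classes of `OmegaEquiv`. -/
def IsOmegaEdgeBlock {V : Type*} (G : SimpleGraph V) (B : Set V) : Prop :=
  ∃ x, B = {y | OmegaEquiv G x y}

/-- Given a tree-cut decomposition `(T, X)` and an edge `t₁t₂` of `T`, the union of the parts
indexed by the component of `T - t₁t₂` containing `t₁`. -/
def side {τ V : Type*} (T : SimpleGraph τ) (X : τ → Set V) (t₁ t₂ : τ) : Set V :=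
  ⋃ t ∈ {u | (T.deleteEdges {s(t₁, t₂)}).Reachable t₁ u}, X t

/-- A region of `G` is (the vertex set of) a connected subgraph with finite edge boundary. -/
def IsRegion {V : Type*} (G : SimpleGraph V) (C : Set V) : Prop :=
  (G.induce C).Connected ∧ (edgesBetween G C Cᶜ).Finite

open SimpleGraph

lemma omegaEquiv_of_mem_block {V : Type*} (G : SimpleGraph V) {B : Set V}
    (hB : IsOmegaEdgeBlock G B) {x y : V} (hx : x ∈ B) (hy : y ∈ B) : OmegaEquiv G x y := by
  obtain ⟨a, rfl⟩ := hB
  exact fun F hF => ((hx F hF).symm.trans (hy F hF))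

lemma exists_crossing {τ : Type*} (T : SimpleGraph τ) (C' : Set τ) :
    ∀ {a b : τ} (w : T.Walk a b), w.IsPath → a ∈ C' → b ∉ C' →
    ∃ s₁ s₂, s₁ ∈ C' ∧ s₂ ∉ C' ∧ T.Adj s₁ s₂ ∧
      (T.deleteEdges {s(s₁, s₂)}).Reachable s₂ b := by
  intro a b w
  induction w with
  | nil => intro _ ha hb; exact absurd ha hb
  | @cons u c d h w ih =>
    intro hp ha hb
    by_cases hc : c ∈ C'
    · exact ih hp.of_cons hc hb
    · refine ⟨u, c, ha, hc, h, ?_⟩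
      have hu : u ∉ w.support := by
        have := hp.support_nodup
        simp only [SimpleGraph.Walk.support_cons, List.nodup_cons] at this
        exact this.1
      refine ⟨w.transfer _ ?_⟩
      intro e he
      rw [SimpleGraph.edgeSet_deleteEdges]
      refine ⟨w.edges_subset_edgeSet he, ?_⟩
      intro hmem
      rw [Set.mem_singleton_iff] at hmem
      subst hmem
      exact hu (w.fst_mem_support_of_mem_edges he)

lemma reachable_delete_of_induce {τ : Type*} {T : SimpleGraph τ} {C' : Set τ} {s₁ s₂ : τ}
    (hs₂ : s₂ ∉ C') :
    ∀ {p q : C'} (_ : (T.induce C').Walk p q),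
      (T.deleteEdges {s(s₁, s₂)}).Reachable p q := by
  intro p q w
  induction w with
  | nil => exact Reachable.refl _
  | @cons a b c h w ih =>
    refine Reachable.trans (Adj.reachable ?_) ih
    rw [SimpleGraph.deleteEdges_adj]
    refine ⟨h, ?_⟩
    intro hmem
    rw [Set.mem_singleton_iff, Sym2.eq_iff] at hmem
    rcases hmem with ⟨_, h2⟩ | ⟨h1, _⟩
    · exact hs₂ (h2 ▸ b.2)
    · exact hs₂ (h1 ▸ a.2)

lemma walk_stay_in {V : Type*} {G : SimpleGraph V} {C : Set V} {F : Set (Sym2 V)}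
    (hF : ∀ x ∈ C, ∀ y ∉ C, G.Adj x y → s(x, y) ∈ F) :
    ∀ {x z : V} (_ : (G.deleteEdges F).Walk x z) (hx : x ∈ C),
      ∃ hz : z ∈ C, (G.induce C).Reachable ⟨x, hx⟩ ⟨z, hz⟩ := by
  intro x z w
  induction w with
  | nil => intro hx; exact ⟨hx, Reachable.refl _⟩
  | @cons a b c h w ih =>
    intro hx
    rw [SimpleGraph.deleteEdges_adj] at h
    have hb : b ∈ C := by
      by_contra hb
      exact h.2 (hF a hx b hb h.1)
    obtain ⟨hz, hr⟩ := ih hb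
    exact ⟨hz, Reachable.trans (Adj.reachable (show (G.induce C).Adj ⟨a, hx⟩ ⟨b, hb⟩ from h.1)) hr⟩

/-- For a tree-cut decomposition of finite adhesion into the ω-edge blocks, with adjacent
parts joined by edges, every region of the decomposition tree induces a region of `G`. -/
theorem region_of_tree_region {V τ : Type*} (G : SimpleGraph V) (hG : G.Connected)
    (T : SimpleGraph τ) (hT : T.IsTree) (X : τ → Set V)
    (hblocks : ∀ t, IsOmegaEdgeBlock G (X t))
    (hinj : Function.Injective X)
    (hsurj : ∀ B : Set V, IsOmegaEdgeBlock G B → ∃ t, X t = B)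
    (hadhesion : ∀ t₁ t₂, T.Adj t₁ t₂ →
      (edgesBetween G (side T X t₁ t₂) (side T X t₂ t₁)).Finite)
    (hedge : ∀ t₁ t₂, T.Adj t₁ t₂ → ∃ x ∈ X t₁, ∃ y ∈ X t₂, G.Adj x y)
    (C' : Set τ) (hC' : IsRegion T C') :
    IsRegion G (⋃ t ∈ C', X t) := by
  classical
  set C : Set V := ⋃ t ∈ C', X t with hCdef
  -- every vertex lies in some part
  have hvert : ∀ y : V, ∃ t, y ∈ X t := by
    intro y
    obtain ⟨t, ht⟩ := hsurj {z | OmegaEquiv G y z} ⟨y, rfl⟩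
    exact ⟨t, by rw [ht]; exact fun F hF => SimpleGraph.Reachable.refl y⟩
  -- finiteness of the boundary
  have hP : {p : τ × τ | p.1 ∈ C' ∧ p.2 ∉ C' ∧ T.Adj p.1 p.2}.Finite := by
    apply Set.Finite.of_finite_image (f := fun p => s(p.1, p.2))
    · apply hC'.2.subset
      rintro e ⟨⟨a, b⟩, ⟨ha, hb, hab⟩, rfl⟩
      exact ⟨T.mem_edgeSet.mpr hab, a, ha, b, hb, rfl⟩
    · rintro ⟨a, b⟩ ⟨ha, hb, -⟩ ⟨c, d⟩ ⟨hc, hd, -⟩ heq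
      rcases Sym2.eq_iff.mp heq with ⟨rfl, rfl⟩ | ⟨rfl, rfl⟩
      · rfl
      · exact absurd ha hd
  have hFfin : (edgesBetween G C Cᶜ).Finite := by
    apply (hP.biUnion (fun p hp => hadhesion p.1 p.2 hp.2.2)).subset
    rintro e ⟨he, x, hx, y, hy, rfl⟩
    obtain ⟨t, ht, hxt⟩ := Set.mem_iUnion₂.mp hx
    obtain ⟨t', hyt'⟩ := hvert y
    have ht' : t' ∉ C' := fun h => hy (Set.mem_biUnion h hyt')
    obtain ⟨w⟩ := hT.isConnected.preconnected t t'
    obtain ⟨s₁, s₂, hs₁, hs₂, hadj, hreach₂⟩ :=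
      exists_crossing T C' (w.toPath : T.Walk t t') w.toPath.2 ht ht'
    refine Set.mem_biUnion (show ((s₁, s₂) : τ × τ) ∈ _ from ⟨hs₁, hs₂, hadj⟩) ?_
    refine ⟨he, x, ?_, y, ?_, rfl⟩
    · exact Set.mem_biUnion
        (show t ∈ {u | (T.deleteEdges {s(s₁, s₂)}).Reachable s₁ u} from
          reachable_delete_of_induce hs₂
            (hC'.1.preconnected ⟨s₁, hs₁⟩ ⟨t, ht⟩).some) hxt
    · refine Set.mem_biUnion
        (show t' ∈ {u | (T.deleteEdges {s(s₂, s₁)}).Reachable s₂ u} from ?_) hyt'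
      rw [Sym2.eq_swap (a := s₂) (b := s₁)]
      exact hreach₂
  have hFcross : ∀ x ∈ C, ∀ y ∉ C, G.Adj x y → s(x, y) ∈ edgesBetween G C Cᶜ :=
    fun x hx y hy h => ⟨G.mem_edgeSet.mpr h, x, hx, y, hy, rfl⟩
  -- vertices in the same part are connected within C
  have hsame : ∀ t, t ∈ C' → ∀ x ∈ X t, ∀ x' ∈ X t, ∀ (hx : x ∈ C) (hx' : x' ∈ C),
      (G.induce C).Reachable ⟨x, hx⟩ ⟨x', hx'⟩ := by
    intro t ht x hx x' hx' hxC hx'C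
    have heq : OmegaEquiv G x x' := omegaEquiv_of_mem_block G (hblocks t) hx hx'
    obtain ⟨w⟩ := heq _ hFfin
    obtain ⟨hz, hr⟩ := walk_stay_in hFcross w hxC
    exact hr
  have hwalkE : ∀ (p q : C') (_ : (T.induce C').Walk p q),
      ∀ x ∈ X p.1, ∀ x' ∈ X q.1, ∀ (hx : x ∈ C) (hx' : x' ∈ C),
      (G.induce C).Reachable ⟨x, hx⟩ ⟨x', hx'⟩ := by
    intro p q w
    induction w with
    | @nil u => intro x hx x' hx' hxC hx'C; exact hsame _ u.2 x hx x' hx' hxC hx'C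
    | @cons a b c h w ih =>
      intro x hx x' hx' hxC hx'C
      obtain ⟨u, hu, v, hv, huv⟩ := hedge a.1 b.1 h
      have huC : u ∈ C := Set.mem_biUnion a.2 hu
      have hvC : v ∈ C := Set.mem_biUnion b.2 hv
      exact ((hsame _ a.2 x hx u hu hxC huC).trans
        (SimpleGraph.Adj.reachable (show (G.induce C).Adj ⟨u, huC⟩ ⟨v, hvC⟩ from huv))).trans
        (ih v hv x' hx' hvC hx'C)
  constructor
  · rw [SimpleGraph.connected_iff]
    constructor
    · rintro ⟨xu, hxu⟩ ⟨xv, hxv⟩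
      obtain ⟨t, ht, hxt⟩ := Set.mem_iUnion₂.mp hxu
      obtain ⟨t', ht', hxt'⟩ := Set.mem_iUnion₂.mp hxv
      obtain ⟨w⟩ := hC'.1.preconnected ⟨t, ht⟩ ⟨t', ht'⟩
      exact hwalkE ⟨t, ht⟩ ⟨t', ht'⟩ w xu hxt xv hxt' hxu hxv
    · obtain ⟨⟨t₀, ht₀⟩⟩ := hC'.1.nonempty
      obtain ⟨a, hXa⟩ := hblocks t₀
      have ha : a ∈ X t₀ := by rw [hXa]; exact fun F hF => SimpleGraph.Reachable.refl a
      exact ⟨⟨a, Set.mem_biUnion ht₀ ha⟩⟩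
  · exact hFfin
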